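/- arXiv:1103.5657 — 6 statements merged into one kernel-verified Lean document; each statement's English description precedes it below -/
import Mathlib

section
/- Let $x_0,\ldots,x_t$ and $\beta$ be integers, and define $x_\nu := \beta + \min_{j_1+j_2=\nu-1,\ j_1,j_2\ge 0}(x_{j_1}+x_{j_2})$ for all $\nu \ge t+1$. Let $p$ be an index with $0\le p\le t$ minimizing $(x_j+\beta)/(j+1)$. Then for all $\nu \ge t+1$ we have $x_\nu - x_{\nu-(p+1)} \le x_p + \beta$. -/
theorem stmt0 (t : ℕ) (β : ℤ) (x : ℕ → ℤ)
    (hrec : ∀ ν : ℕ, ∀ _hν : t + 1 ≤ ν,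
      x ν = β + (Finset.range ν).inf' (Finset.nonempty_range_iff.mpr (by omega))
        (fun j => x j + x (ν - 1 - j)))
    (p : ℕ) (hp : p ≤ t)
    (hmin : ∀ j : ℕ, j ≤ t → ((x p : ℚ) + β) / (p + 1) ≤ ((x j : ℚ) + β) / (j + 1)) :
    ∀ ν : ℕ, t + 1 ≤ ν → x ν - x (ν - (p + 1)) ≤ x p + β := by
  intro ν hν
  have hmem : p ∈ Finset.range ν := Finset.mem_range.mpr (by omega)
  have hle := Finset.inf'_le (f := fun j => x j + x (ν - 1 - j)) hmem
  rw [hrec ν hν]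
  have heq : ν - 1 - p = ν - (p + 1) := by omega
  rw [heq] at hle
  linarith
end

section
/- Let $r\ge 2$ and let $\alpha=(\alpha_i)_{i\ge 1}$ be a sequence with entries in $\{1,\ldots,r\}$. Define $\nu_{i,s}:=1+|\{1\le j\le i : \alpha_j=s\}|$, sequences $x_s$ with $x_{s,0}:=0$, and for $i\ge 0$: $k_i := 1+\sum_{s=1}^r \min_{j_1+j_2=\nu_{i,s}-1,\ j_1,j_2\ge 0}(x_{s,j_1}+x_{s,j_2})$, and $x_{s,\nu_{i,s}}:=k_i$ if $\alpha_{i+1}=s$. Then the sequence $(k_i)_{i\ge 0}$ is strictly increasing. -/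
def cnt (r : ℕ) (α : ℕ → Fin r) (s : Fin r) (i : ℕ) : ℕ :=
  ((Finset.range i).filter (fun j => α j = s)).card

def Minf (x : ℕ → ℤ) (m : ℕ) : ℤ :=
  (Finset.range (1 + m)).inf' (Finset.nonempty_range_iff.mpr (by omega))
    (fun j => x j + x (m - j))

lemma cnt_zero (r : ℕ) (α : ℕ → Fin r) (s : Fin r) : cnt r α s 0 = 0 := by
  simp [cnt]

lemma cnt_succ (r : ℕ) (α : ℕ → Fin r) (s : Fin r) (i : ℕ) :
    cnt r α s (i + 1) = if α i = s then cnt r α s i + 1 else cnt r α s i := by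
  unfold cnt
  rw [Finset.range_add_one, Finset.filter_insert]
  split
  · rw [Finset.card_insert_of_notMem (by simp)]
  · rfl

lemma cnt_mono (r : ℕ) (α : ℕ → Fin r) (s : Fin r) {i i' : ℕ} (h : i ≤ i') :
    cnt r α s i ≤ cnt r α s i' :=
  Finset.card_le_card (Finset.filter_subset_filter _ (Finset.range_subset_range.mpr h))

lemma cnt_exists (r : ℕ) (α : ℕ → Fin r) (s : Fin r) (m n : ℕ)
    (h1 : 1 ≤ m) (h2 : m ≤ cnt r α s n) :
    ∃ i < n, α i = s ∧ cnt r α s i + 1 = m := by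
  induction n with
  | zero => rw [cnt_zero] at h2; omega
  | succ n ih =>
    rcases Nat.lt_or_ge (cnt r α s n) m with h | h
    · have hs := cnt_succ r α s n
      by_cases hα : α n = s
      · rw [if_pos hα] at hs
        exact ⟨n, by omega, hα, by omega⟩
      · rw [if_neg hα] at hs; omega
    · obtain ⟨i, hi, h3, h4⟩ := ih h
      exact ⟨i, by omega, h3, h4⟩

theorem stmt5 (r : ℕ) (hr : 2 ≤ r) (α : ℕ → Fin r)
    (x : Fin r → ℕ → ℤ) (k : ℕ → ℤ)
    (hx0 : ∀ s, x s 0 = 0)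
    (hk : ∀ i : ℕ, k i = 1 + ∑ s : Fin r,
      (Finset.range (1 + ((Finset.range i).filter (fun j => α j = s)).card)).inf'
        (Finset.nonempty_range_iff.mpr (by omega))
        (fun j => x s j + x s (((Finset.range i).filter (fun j => α j = s)).card - j)))
    (hstep : ∀ i : ℕ,
      x (α i) (1 + ((Finset.range i).filter (fun j => α j = α i)).card) = k i) :
    StrictMono k := by
  have hk' : ∀ i, k i = 1 + ∑ s : Fin r, Minf (x s) (cnt r α s i) := fun i => hk i
  have hstep' : ∀ i, x (α i) (cnt r α (α i) i + 1) = k i := by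
    intro i
    have := hstep i
    rwa [Nat.add_comm 1 _] at this
  have hxval : ∀ s m n, 1 ≤ m → m ≤ cnt r α s n →
      ∃ i < n, x s m = k i ∧ cnt r α s i + 1 = m := by
    intro s m n h1 h2
    obtain ⟨i, hi, hα, hc⟩ := cnt_exists r α s m n h1 h2
    refine ⟨i, hi, ?_, hc⟩
    have h := hstep' i
    rw [hα, hc] at h
    exact h
  have k0 : k 0 = 1 := by
    rw [hk' 0]
    have : ∀ s : Fin r, Minf (x s) (cnt r α s 0) = 0 := by
      intro s
      rw [cnt_zero]
      simp [Minf, hx0]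
    rw [Finset.sum_congr rfl (fun s _ => this s)]
    simp
  have key : ∀ i, k i < k (i + 1) := by
    intro i
    induction i using Nat.strong_induction_on with
    | _ i IH =>
    have kle : ∀ q, q ≤ i → ∀ p, p ≤ q → k p ≤ k q := by
      intro q hq
      induction q with
      | zero => intro p hp; interval_cases p; exact le_refl _
      | succ q ihq =>
        intro p hp
        rcases Nat.lt_or_ge p (q + 1) with h | h
        · exact le_trans (ihq (by omega) p (by omega)) (le_of_lt (IH q (by omega)))
        · have : p = q + 1 := by omega
          subst this; exact le_refl _
    have kpos : ∀ i', i' ≤ i → 1 ≤ k i' := by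
      intro i' hi'
      have := kle i' hi' 0 (Nat.zero_le _)
      omega
    have xpos : ∀ s m, m ≤ cnt r α s (i + 1) → 0 ≤ x s m := by
      intro s m hm
      rcases Nat.eq_zero_or_pos m with h | h
      · subst h; rw [hx0]
      · obtain ⟨i', hi', hv, _⟩ := hxval s m (i + 1) h hm
        rw [hv]
        have := kpos i' (by omega)
        omega
    have Mpos : ∀ s m, m ≤ cnt r α s (i + 1) → 0 ≤ Minf (x s) m := by
      intro s m hm
      apply Finset.le_inf'
      intro j hj
      rw [Finset.mem_range] at hj
      have h1 := xpos s j (by omega)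
      have h2 := xpos s (m - j) (by omega)
      omega
    have MleK : ∀ s : Fin r, 1 + Minf (x s) (cnt r α s i) ≤ k i := by
      intro s
      rw [hk' i]
      have hsum : ∑ t ∈ Finset.univ.erase s, Minf (x t) (cnt r α t i)
          + Minf (x s) (cnt r α s i) = ∑ t : Fin r, Minf (x t) (cnt r α t i) :=
        Finset.sum_erase_add _ _ (Finset.mem_univ s)
      have hnn : 0 ≤ ∑ t ∈ Finset.univ.erase s, Minf (x t) (cnt r α t i) := by
        apply Finset.sum_nonneg
        intro t _
        exact Mpos t _ (cnt_mono r α t (by omega))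
      omega
    have xstep : ∀ s m, 1 ≤ m → m ≤ cnt r α s (i + 1) → x s (m - 1) + 1 ≤ x s m := by
      intro s m h1 h2
      obtain ⟨i2, hi2, hv2, hc2⟩ := hxval s m (i + 1) h1 h2
      rcases Nat.lt_or_ge m 2 with h | h
      · have : m = 1 := by omega
        subst this
        simp only [Nat.sub_self, hx0, hv2]
        have := kpos i2 (by omega)
        omega
      · obtain ⟨i1, hi1, hv1, hc1⟩ := hxval s (m - 1) i2 (by omega) (by omega)
        rw [hv1, hv2]
        have hlt : k i1 < k i2 := by
          have h1' : k i1 ≤ k (i2 - 1) := kle (i2 - 1) (by omega) i1 (by omega)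
          have h2' : k (i2 - 1) < k (i2 - 1 + 1) := IH (i2 - 1) (by omega)
          have : i2 - 1 + 1 = i2 := by omega
          rw [this] at h2'
          omega
        omega
    -- main comparison
    have hcs0 : cnt r α (α i) (i + 1) = cnt r α (α i) i + 1 := by
      rw [cnt_succ, if_pos rfl]
    have hct : ∀ t : Fin r, t ≠ α i → cnt r α t (i + 1) = cnt r α t i := by
      intro t ht
      rw [cnt_succ, if_neg (fun h => ht h.symm)]
    have termle : ∀ t : Fin r,
        Minf (x t) (cnt r α t i) + (if t = α i then 1 else 0)
          ≤ Minf (x t) (cnt r α t (i + 1)) := by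
      intro t
      by_cases ht : t = α i
      · rw [ht, if_pos rfl, hcs0]
        apply Finset.le_inf'
        intro j hj
        rw [Finset.mem_range] at hj
        rcases Nat.eq_zero_or_pos j with hj0 | hj1
        · subst hj0
          simp only [hx0, Nat.sub_zero, zero_add]
          have h1 := MleK (α i)
          have hx1 : x (α i) (cnt r α (α i) i + 1) = k i := hstep' i
          omega
        · rcases Nat.lt_or_ge j (cnt r α (α i) i + 1) with hjm | hjm
          · have hstep1 := xstep (α i) j hj1 (by rw [hcs0]; omega)
            have hinfle : Minf (x (α i)) (cnt r α (α i) i)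
                ≤ x (α i) (j - 1) + x (α i) (cnt r α (α i) i - (j - 1)) :=
              Finset.inf'_le _ (by rw [Finset.mem_range]; omega)
            have heq : cnt r α (α i) i - (j - 1) = cnt r α (α i) i + 1 - j := by omega
            rw [heq] at hinfle
            have := xpos (α i) (cnt r α (α i) i + 1 - j) (by rw [hcs0]; omega)
            omega
          · have hje : j = cnt r α (α i) i + 1 := by omega
            subst hje
            have h0 : cnt r α (α i) i + 1 - (cnt r α (α i) i + 1) = 0 := by omega
            rw [h0, hx0, add_zero]
            have h1 := MleK (α i)
            have hx1 : x (α i) (cnt r α (α i) i + 1) = k i := hstep' i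
            omega
      · rw [if_neg ht, hct t ht, add_zero]
    have hsum : ∑ t : Fin r, (Minf (x t) (cnt r α t i) + (if t = α i then 1 else 0))
        ≤ ∑ t : Fin r, Minf (x t) (cnt r α t (i + 1)) :=
      Finset.sum_le_sum (fun t _ => termle t)
    rw [Finset.sum_add_distrib] at hsum
    have hind : ∑ t : Fin r, (if t = α i then (1:ℤ) else 0) = 1 := by
      simp
    rw [hind] at hsum
    rw [hk' i, hk' (i + 1)]
    omega
  exact strictMono_nat_of_lt_succ key
end

section
/- Let $p$ range over positive integers and $\mu$ over reals with $0\le \mu < 1$. Then the maximum of $\min\{4+\mu/p,\ 4+(1-2\mu)/(p+\mu)\}$ over all such $(p,\mu)$ equals $\frac{1}{2}(\sqrt{13}+5)$, attained at $p=1$ and $\mu=\frac{1}{2}(\sqrt{13}-3)$. -/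
theorem stmt7 :
    IsGreatest {v : ℝ | ∃ (p : ℕ) (μ : ℝ), 1 ≤ p ∧ 0 ≤ μ ∧ μ < 1 ∧
        v = min (4 + μ / p) (4 + (1 - 2 * μ) / (p + μ))}
      ((Real.sqrt 13 + 5) / 2) ∧
    min (4 + ((Real.sqrt 13 - 3) / 2) / (1 : ℝ))
        (4 + (1 - 2 * ((Real.sqrt 13 - 3) / 2)) / ((1 : ℝ) + (Real.sqrt 13 - 3) / 2))
      = (Real.sqrt 13 + 5) / 2 := by
  have h13 : Real.sqrt 13 ^ 2 = 13 := Real.sq_sqrt (by norm_num)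
  have hs3 : (3:ℝ) ≤ Real.sqrt 13 := by nlinarith [Real.sqrt_nonneg 13]
  have hs4 : Real.sqrt 13 ≤ 4 := by nlinarith [Real.sqrt_nonneg 13]
  set s := Real.sqrt 13 with hsdef
  have hmineq : min (4 + ((s - 3) / 2) / (1 : ℝ))
        (4 + (1 - 2 * ((s - 3) / 2)) / ((1 : ℝ) + (s - 3) / 2)) = (s + 5) / 2 := by
    have hden : (0:ℝ) < 1 + (s - 3) / 2 := by linarith
    have h2 : 4 + (1 - 2 * ((s - 3) / 2)) / ((1 : ℝ) + (s - 3) / 2) = (s + 5) / 2 := by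
      rw [eq_comm, ← sub_eq_iff_eq_add', eq_div_iff (ne_of_gt hden)]
      nlinarith
    have h1 : 4 + ((s - 3) / 2) / (1:ℝ) = (s + 5) / 2 := by ring
    rw [h1, h2, min_self]
  refine ⟨⟨⟨1, (s - 3) / 2, le_refl 1, by linarith, by linarith, ?_⟩, ?_⟩, hmineq⟩
  · push_cast
    exact hmineq.symm
  · rintro v ⟨p, μ, hp, hμ0, hμ1, rfl⟩
    have hp1 : (1:ℝ) ≤ (p:ℝ) := by exact_mod_cast hp
    have hc : ((s - 3) / 2) ^ 2 + 3 * ((s - 3) / 2) - 1 = 0 := by nlinarith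
    by_cases hcase : μ ≤ ((s - 3) / 2) * p
    · refine le_trans (min_le_left _ _) ?_
      have : μ / p ≤ (s - 3) / 2 := by
        rw [div_le_iff₀ (by linarith)]
        linarith
      linarith
    · refine le_trans (min_le_right _ _) ?_
      push_neg at hcase
      have hden : (0:ℝ) < (p:ℝ) + μ := by linarith
      have : (1 - 2 * μ) / ((p:ℝ) + μ) ≤ (s - 3) / 2 := by
        rw [div_le_iff₀ hden]
        nlinarith
      linarith
end

section
/- Let $\mu_2,\mu_3$ range over reals with $0\le\mu_2<1$ and $0\le\mu_3<1$. Then the maximum of $\min\{5+2\mu_2,\ 6-3\mu_2/(1+\mu_2),\ 5+\mu_3,\ 6+(1-4\mu_3)/(1+\mu_3)\}$ equals $\sqrt{6}+3$, attained at $\mu_2=\frac{1}{2}(\sqrt{6}-2)$ and $\mu_3=\sqrt{6}-2$. -/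
lemma sqrt6_sq : Real.sqrt 6 ^ 2 = 6 := Real.sq_sqrt (by norm_num)

lemma sqrt6_gt : (2:ℝ) < Real.sqrt 6 := by
  nlinarith [sqrt6_sq, Real.sqrt_nonneg 6]

lemma sqrt6_lt : Real.sqrt 6 < 3 := by
  nlinarith [sqrt6_sq, Real.sqrt_nonneg 6]

lemma key :
    min (min (5 + 2 * ((Real.sqrt 6 - 2) / 2)) (6 - 3 * ((Real.sqrt 6 - 2) / 2) / (1 + (Real.sqrt 6 - 2) / 2)))
        (min (5 + (Real.sqrt 6 - 2)) (6 + (1 - 4 * (Real.sqrt 6 - 2)) / (1 + (Real.sqrt 6 - 2))))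
      = Real.sqrt 6 + 3 := by
  set s := Real.sqrt 6 with hs
  have h2 : (2:ℝ) < s := sqrt6_gt
  have hsq : s ^ 2 = 6 := sqrt6_sq
  have e1 : 5 + 2 * ((s - 2) / 2) = s + 3 := by ring
  have e2 : 6 - 3 * ((s - 2) / 2) / (1 + (s - 2) / 2) = s + 3 := by
    have h : (1 + (s - 2) / 2) ≠ 0 := by nlinarith
    field_simp
    have h' : 2 + (s - 2) = s := by ring
    have hs0 : s ≠ 0 := by linarith
    rw [h']
    field_simp
    nlinarith
  have e3 : 5 + (s - 2) = s + 3 := by ring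
  have e4 : 6 + (1 - 4 * (s - 2)) / (1 + (s - 2)) = s + 3 := by
    have h : (1 + (s - 2)) ≠ 0 := by nlinarith
    field_simp
    nlinarith
  simp [e1, e2, e3, e4]

theorem stmt8 :
    IsGreatest {v : ℝ | ∃ μ₂ μ₃ : ℝ, 0 ≤ μ₂ ∧ μ₂ < 1 ∧ 0 ≤ μ₃ ∧ μ₃ < 1 ∧
        v = min (min (5 + 2 * μ₂) (6 - 3 * μ₂ / (1 + μ₂)))
              (min (5 + μ₃) (6 + (1 - 4 * μ₃) / (1 + μ₃)))}
      (Real.sqrt 6 + 3) ∧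
    min (min (5 + 2 * ((Real.sqrt 6 - 2) / 2)) (6 - 3 * ((Real.sqrt 6 - 2) / 2) / (1 + (Real.sqrt 6 - 2) / 2)))
        (min (5 + (Real.sqrt 6 - 2)) (6 + (1 - 4 * (Real.sqrt 6 - 2)) / (1 + (Real.sqrt 6 - 2))))
      = Real.sqrt 6 + 3 := by
  have h2 : (2:ℝ) < Real.sqrt 6 := sqrt6_gt
  have h3 : Real.sqrt 6 < 3 := sqrt6_lt
  have hsq : Real.sqrt 6 ^ 2 = 6 := sqrt6_sq
  refine ⟨⟨⟨(Real.sqrt 6 - 2) / 2, Real.sqrt 6 - 2, by nlinarith, by nlinarith,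
      by nlinarith, by nlinarith, key.symm⟩, ?_⟩, key⟩
  rintro v ⟨μ₂, μ₃, hμ₂0, hμ₂1, hμ₃0, hμ₃1, rfl⟩
  set s := Real.sqrt 6 with hs
  rcases le_or_gt μ₂ ((s - 2) / 2) with h | h
  · calc min (min (5 + 2 * μ₂) (6 - 3 * μ₂ / (1 + μ₂)))
          (min (5 + μ₃) (6 + (1 - 4 * μ₃) / (1 + μ₃)))
        ≤ 5 + 2 * μ₂ := le_trans (min_le_left _ _) (min_le_left _ _)
      _ ≤ s + 3 := by linarith
  · have hp : (0:ℝ) < 1 + μ₂ := by linarith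
    have : 6 - 3 * μ₂ / (1 + μ₂) ≤ s + 3 := by
      rw [sub_le_iff_le_add, ← sub_le_iff_le_add']
      rw [le_div_iff₀ hp]
      nlinarith
    calc min (min (5 + 2 * μ₂) (6 - 3 * μ₂ / (1 + μ₂)))
          (min (5 + μ₃) (6 + (1 - 4 * μ₃) / (1 + μ₃)))
        ≤ 6 - 3 * μ₂ / (1 + μ₂) := le_trans (min_le_left _ _) (min_le_right _ _)
      _ ≤ s + 3 := this
end

section
/- Let $\mu_2,\mu_3$ range over reals with $0\le\mu_2<1$ and $0\le\mu_3<1$. Then the maximum of $\min\{4+(3-2\mu_2+\mu_3)/(1+\mu_2),\ 6+\mu_2+\mu_3,\ 6+(2+\mu_2-4\mu_3)/(1+\mu_3)\}$ equals $\frac{1}{2}(\sqrt{37}+7)$, attained at $\mu_2=\frac{1}{6}(\sqrt{37}-5)$ and $\mu_3=\frac{1}{3}(\sqrt{37}-5)$. -/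
lemma s37_sq : Real.sqrt 37 ^ 2 = 37 := Real.sq_sqrt (by norm_num)

lemma s37_lb : (6 : ℝ) < Real.sqrt 37 := by
  nlinarith [s37_sq, Real.sqrt_nonneg 37]

lemma s37_ub : Real.sqrt 37 < 7 := by
  nlinarith [s37_sq, Real.sqrt_nonneg 37]

theorem stmt9 :
    IsGreatest {v : ℝ | ∃ μ₂ μ₃ : ℝ, 0 ≤ μ₂ ∧ μ₂ < 1 ∧ 0 ≤ μ₃ ∧ μ₃ < 1 ∧
        v = min (min (4 + (3 - 2 * μ₂ + μ₃) / (1 + μ₂)) (6 + μ₂ + μ₃))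
              (6 + (2 + μ₂ - 4 * μ₃) / (1 + μ₃))}
      ((Real.sqrt 37 + 7) / 2) ∧
    min (min (4 + (3 - 2 * ((Real.sqrt 37 - 5) / 6) + (Real.sqrt 37 - 5) / 3) / (1 + (Real.sqrt 37 - 5) / 6))
             (6 + (Real.sqrt 37 - 5) / 6 + (Real.sqrt 37 - 5) / 3))
        (6 + (2 + (Real.sqrt 37 - 5) / 6 - 4 * ((Real.sqrt 37 - 5) / 3)) / (1 + (Real.sqrt 37 - 5) / 3))
      = (Real.sqrt 37 + 7) / 2 := by
  set s := Real.sqrt 37 with hs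
  have hsq : s ^ 2 = 37 := s37_sq
  have hlb : (6:ℝ) < s := s37_lb
  have hub : s < 7 := s37_ub
  have key : min (min (4 + (3 - 2 * ((s - 5) / 6) + (s - 5) / 3) / (1 + (s - 5) / 6))
             (6 + (s - 5) / 6 + (s - 5) / 3))
        (6 + (2 + (s - 5) / 6 - 4 * ((s - 5) / 3)) / (1 + (s - 5) / 3)) = (s + 7) / 2 := by
    have h1 : 4 + (3 - 2 * ((s - 5) / 6) + (s - 5) / 3) / (1 + (s - 5) / 6) = (s + 7) / 2 := by
      have hd : (6:ℝ) + (s - 5) ≠ 0 := by nlinarith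
      field_simp
      nlinarith [hsq]
    have h2 : 6 + (s - 5) / 6 + (s - 5) / 3 = (s + 7) / 2 := by ring
    have h3 : 6 + (2 + (s - 5) / 6 - 4 * ((s - 5) / 3)) / (1 + (s - 5) / 3) = (s + 7) / 2 := by
      have hd : (3:ℝ) + (s - 5) ≠ 0 := by nlinarith
      field_simp
      nlinarith [hsq]
    rw [h1, h2, h3, min_self, min_self]
  refine ⟨⟨⟨(s - 5) / 6, (s - 5) / 3, by nlinarith, by nlinarith, by nlinarith, by nlinarith,
      key.symm⟩, ?_⟩, key⟩
  rintro v ⟨μ₂, μ₃, h2a, h2b, h3a, h3b, rfl⟩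
  by_contra h
  push_neg at h
  have hm1 : (s + 7) / 2 < 4 + (3 - 2 * μ₂ + μ₃) / (1 + μ₂) :=
    lt_of_lt_of_le h (le_trans (min_le_left _ _) (min_le_left _ _))
  have hm2 : (s + 7) / 2 < 6 + μ₂ + μ₃ :=
    lt_of_lt_of_le h (le_trans (min_le_left _ _) (min_le_right _ _))
  have hm3 : (s + 7) / 2 < 6 + (2 + μ₂ - 4 * μ₃) / (1 + μ₃) :=
    lt_of_lt_of_le h (min_le_right _ _)
  have hp2 : (0:ℝ) < 1 + μ₂ := by linarith
  have hp3 : (0:ℝ) < 1 + μ₃ := by linarith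
  have hm1' : ((s + 7) / 2 - 4) * (1 + μ₂) < 3 - 2 * μ₂ + μ₃ :=
    (lt_div_iff₀ hp2).mp (by linarith)
  have hm3' : ((s + 7) / 2 - 6) * (1 + μ₃) < 2 + μ₂ - 4 * μ₃ :=
    (lt_div_iff₀ hp3).mp (by linarith)
  nlinarith [hsq, mul_pos hp2 hp3, sq_nonneg (μ₂ + μ₃), sq_nonneg (6 * μ₂ - (s - 5)),
    sq_nonneg (3 * μ₃ - (s - 5)), mul_nonneg h2a h3a]
end

section
/- For every integer $p\ge 1$ and every real $\mu$ with $0\le\mu<1$, we have $\min\{4+\mu/p,\ 4+(1-2\mu)/(p+\mu)\} \le \frac{1}{2}(\sqrt{13}+5)$. -/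
theorem stmt10 (p : ℕ) (hp : 1 ≤ p) (μ : ℝ) (hμ0 : 0 ≤ μ) (hμ1 : μ < 1) :
    min (4 + μ / p) (4 + (1 - 2 * μ) / (p + μ)) ≤ (Real.sqrt 13 + 5) / 2 := by
  set s := Real.sqrt 13 with hsdef
  have hs2 : s ^ 2 = 13 := Real.sq_sqrt (by norm_num)
  have hs0 : 0 ≤ s := Real.sqrt_nonneg 13
  have hs3 : 3 ≤ s := by nlinarith
  have hp' : (1:ℝ) ≤ p := by exact_mod_cast hp
  have hppos : (0:ℝ) < p := by linarith
  rcases le_or_gt μ ((p : ℝ) * ((s - 3) / 2)) with h | h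
  · have h1 : μ / p ≤ (s - 3) / 2 := by
      rw [div_le_iff₀ hppos]
      nlinarith
    calc min (4 + μ / p) (4 + (1 - 2 * μ) / (p + μ)) ≤ 4 + μ / p := min_le_left _ _
      _ ≤ (s + 5) / 2 := by linarith
  · have hd : (0:ℝ) < (p : ℝ) + μ := by linarith
    have h1 : (1 - 2 * μ) / (p + μ) ≤ (s - 3) / 2 := by
      rw [div_le_iff₀ hd]
      nlinarith [mul_lt_mul_of_pos_left h (show (0:ℝ) < s + 1 by linarith)]
    calc min (4 + μ / p) (4 + (1 - 2 * μ) / (p + μ)) ≤ 4 + (1 - 2 * μ) / (p + μ) :=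
        min_le_right _ _
      _ ≤ (s + 5) / 2 := by linarith
end
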